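/- Let E_R, E_D: ℝ → ℝ be twice differentiable with -L ≤ E_i'' ≤ -μ on [0, X] (0 < μ ≤ L), let x_R, x_D ≥ 0 with x_R + x_D ≤ X, and set g = E_R'(x_R) - E_D'(x_D) > 0. Suppose E_R'(x_R + x_D) - E_D'(0) < 0. If δ ∈ (0, x_D] satisfies E_R'(x_R+δ) - E_D'(x_D-δ) ≥ 0 and δ ≥ δ*/2 for the unique zero δ* of t ↦ E_R'(x_R+t) - E_D'(x_D-t), then [E_R(x_R+δ) + E_D(x_D-δ)] - [E_R(x_R) + E_D(x_D)] ≥ 3g²/(16L). -/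

import Mathlib

lemma monoOn_aux {f f' : ℝ → ℝ} {a b : ℝ}
    (hf : ∀ x ∈ Set.Icc a b, HasDerivAt f (f' x) x)
    (h0 : ∀ x ∈ Set.Icc a b, 0 ≤ f' x) : MonotoneOn f (Set.Icc a b) := by
  apply monotoneOn_of_deriv_nonneg (convex_Icc a b)
    (fun x hx => (hf x hx).continuousAt.continuousWithinAt)
  · intro x hx
    rw [interior_Icc] at hx
    exact ((hf x (Set.Ioo_subset_Icc_self hx)).differentiableAt).differentiableWithinAt
  · intro x hx
    rw [interior_Icc] at hx
    rw [(hf x (Set.Ioo_subset_Icc_self hx)).deriv]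
    exact h0 x (Set.Ioo_subset_Icc_self hx)

lemma antiOn_aux {f f' : ℝ → ℝ} {a b : ℝ}
    (hf : ∀ x ∈ Set.Icc a b, HasDerivAt f (f' x) x)
    (h0 : ∀ x ∈ Set.Icc a b, f' x ≤ 0) : AntitoneOn f (Set.Icc a b) := by
  apply antitoneOn_of_deriv_nonpos (convex_Icc a b)
    (fun x hx => (hf x hx).continuousAt.continuousWithinAt)
  · intro x hx
    rw [interior_Icc] at hx
    exact ((hf x (Set.Ioo_subset_Icc_self hx)).differentiableAt).differentiableWithinAt
  · intro x hx
    rw [interior_Icc] at hx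
    rw [(hf x (Set.Ioo_subset_Icc_self hx)).deriv]
    exact h0 x (Set.Ioo_subset_Icc_self hx)

lemma strictAntiOn_aux {f f' : ℝ → ℝ} {a b : ℝ}
    (hf : ∀ x ∈ Set.Icc a b, HasDerivAt f (f' x) x)
    (h0 : ∀ x ∈ Set.Icc a b, f' x < 0) : StrictAntiOn f (Set.Icc a b) := by
  apply strictAntiOn_of_deriv_neg (convex_Icc a b)
    (fun x hx => (hf x hx).continuousAt.continuousWithinAt)
  intro x hx
  rw [interior_Icc] at hx
  rw [(hf x (Set.Ioo_subset_Icc_self hx)).deriv]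
  exact h0 x (Set.Ioo_subset_Icc_self hx)

/-- Improvement lower bound for a legitimate transfer δ found by the
halving procedure (δ ≥ δ*/2 where δ* is the unique zero of the gap function):
the gain in total output is at least 3g²/(16L). -/
theorem stmt3 (X L μ xR xD g δ δstar : ℝ)
    (ER ED ER' ED' ER'' ED'' : ℝ → ℝ)
    (hμ : 0 < μ) (hμL : μ ≤ L)
    (hER : ∀ t ∈ Set.Icc (0:ℝ) X, HasDerivAt ER (ER' t) t)
    (hED : ∀ t ∈ Set.Icc (0:ℝ) X, HasDerivAt ED (ED' t) t)
    (hER' : ∀ t ∈ Set.Icc (0:ℝ) X, HasDerivAt ER' (ER'' t) t)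
    (hED' : ∀ t ∈ Set.Icc (0:ℝ) X, HasDerivAt ED' (ED'' t) t)
    (hERbd : ∀ t ∈ Set.Icc (0:ℝ) X, -L ≤ ER'' t ∧ ER'' t ≤ -μ)
    (hEDbd : ∀ t ∈ Set.Icc (0:ℝ) X, -L ≤ ED'' t ∧ ED'' t ≤ -μ)
    (hxR : 0 ≤ xR) (hxD : 0 ≤ xD) (hsum : xR + xD ≤ X)
    (hgdef : g = ER' xR - ED' xD) (hg : 0 < g)
    (hleg : ER' (xR + xD) - ED' 0 < 0)
    (hδpos : 0 < δ) (hδle : δ ≤ xD)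
    (hδleg : ER' (xR + δ) - ED' (xD - δ) ≥ 0)
    (hδstar : δstar ∈ Set.Ioo (0:ℝ) xD)
    (hδstar0 : ER' (xR + δstar) - ED' (xD - δstar) = 0)
    (hδstarUniq : ∀ t ∈ Set.Ioo (0:ℝ) xD, ER' (xR + t) - ED' (xD - t) = 0 → t = δstar)
    (hhalf : δ ≥ δstar / 2) :
    (ER (xR + δ) + ED (xD - δ)) - (ER xR + ED xD) ≥ 3 * g ^ 2 / (16 * L) := by
  have hL : 0 < L := lt_of_lt_of_le hμ hμL
  have hmemR : ∀ t ∈ Set.Icc (0:ℝ) xD, xR + t ∈ Set.Icc (0:ℝ) X := by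
    intro t ht
    exact ⟨by linarith [ht.1], by linarith [ht.2]⟩
  have hmemD : ∀ t ∈ Set.Icc (0:ℝ) xD, xD - t ∈ Set.Icc (0:ℝ) X := by
    intro t ht
    exact ⟨by linarith [ht.2], by linarith [ht.1]⟩
  -- derivative of the gap function G
  have hG : ∀ t ∈ Set.Icc (0:ℝ) xD,
      HasDerivAt (fun s => ER' (xR + s) - ED' (xD - s)) (ER'' (xR + t) + ED'' (xD - t)) t := by
    intro t ht
    have h1 : HasDerivAt (fun s => ER' (xR + s)) (ER'' (xR + t)) t := by
      have h := (hER' (xR + t) (hmemR t ht)).comp t ((hasDerivAt_id t).const_add xR); simp at h; exact h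
    have h2 : HasDerivAt (fun s => ED' (xD - s)) (-(ED'' (xD - t))) t := by
      have h := (hED' (xD - t) (hmemD t ht)).comp t ((hasDerivAt_id t).const_sub xD); simp at h; exact h
    have h := h1.sub h2; simp at h; exact h
  -- derivative of total output F
  have hF : ∀ t ∈ Set.Icc (0:ℝ) xD,
      HasDerivAt (fun s => ER (xR + s) + ED (xD - s)) (ER' (xR + t) - ED' (xD - t)) t := by
    intro t ht
    have h1 : HasDerivAt (fun s => ER (xR + s)) (ER' (xR + t)) t := by
      have h := (hER (xR + t) (hmemR t ht)).comp t ((hasDerivAt_id t).const_add xR); simp at h; exact h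
    have h2 : HasDerivAt (fun s => ED (xD - s)) (-(ED' (xD - t))) t := by
      have h := (hED (xD - t) (hmemD t ht)).comp t ((hasDerivAt_id t).const_sub xD); simp at h; exact h
    have h := h1.add h2; rw [← sub_eq_add_neg] at h; exact h
  have hδstarIcc : δstar ∈ Set.Icc (0:ℝ) xD := ⟨hδstar.1.le, hδstar.2.le⟩
  have hδIcc : δ ∈ Set.Icc (0:ℝ) xD := ⟨hδpos.le, hδle⟩
  have h0Icc : (0:ℝ) ∈ Set.Icc (0:ℝ) xD := ⟨le_refl 0, hxD⟩
  -- G is strictly decreasing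
  have hGanti : StrictAntiOn (fun s => ER' (xR + s) - ED' (xD - s)) (Set.Icc (0:ℝ) xD) := by
    apply strictAntiOn_aux hG
    intro t ht
    have h1 := (hERbd _ (hmemR t ht)).2
    have h2 := (hEDbd _ (hmemD t ht)).2
    linarith
  have hδδstar : δ ≤ δstar := by
    by_contra hcon
    push_neg at hcon
    have := hGanti hδstarIcc hδIcc hcon
    simp only at this
    linarith
  -- G t + 2 L t is monotone
  have hGmono2 : MonotoneOn (fun s => (ER' (xR + s) - ED' (xD - s)) + 2*L*s)
      (Set.Icc (0:ℝ) xD) := by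
    apply monoOn_aux (f' := fun t => (ER'' (xR + t) + ED'' (xD - t)) + 2*L)
    · intro t ht
      have h2 : HasDerivAt (fun s : ℝ => 2*L*s) (2*L) t := by
        simpa using (hasDerivAt_id t).const_mul (2*L)
      exact (hG t ht).add h2
    · intro t ht
      have h1 := (hERbd _ (hmemR t ht)).1
      have h2 := (hEDbd _ (hmemD t ht)).1
      linarith
  have hδstarlb : g ≤ 2*L*δstar := by
    have := hGmono2 h0Icc hδstarIcc hδstar.1.le
    simp only [add_zero, sub_zero, mul_zero] at this
    rw [hgdef]
    linarith
  -- Taylor lower bound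
  have hTaylor : ∀ d ∈ Set.Icc (0:ℝ) xD,
      (ER (xR + d) + ED (xD - d)) - (ER xR + ED xD) ≥ g*d - L*d^2 := by
    intro d hd
    have hmono : MonotoneOn (fun s => (ER (xR + s) + ED (xD - s)) - g*s + L*s^2)
        (Set.Icc (0:ℝ) xD) := by
      apply monoOn_aux
        (f' := fun t => ((ER' (xR + t) - ED' (xD - t)) - g) + 2*L*t)
      · intro t ht
        have hg' : HasDerivAt (fun s : ℝ => g * s) g t := by
          simpa using (hasDerivAt_id t).const_mul g
        have hq : HasDerivAt (fun s : ℝ => L * s^2) (2*L*t) t := by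
          have := (hasDerivAt_pow 2 t).const_mul L
          simpa [mul_comm, mul_left_comm, mul_assoc] using this
        exact ((hF t ht).sub hg').add hq
      · intro t ht
        have := hGmono2 h0Icc ht ht.1
        simp only [add_zero, sub_zero, mul_zero] at this
        linarith [hgdef]
    have := hmono h0Icc hd hd.1
    simp only [add_zero, sub_zero, mul_zero] at this
    nlinarith [this]
  -- G nonnegative on [0, δ], so F monotone there
  have hGnonneg : ∀ t ∈ Set.Icc (0:ℝ) δ, (0:ℝ) ≤ ER' (xR + t) - ED' (xD - t) := by
    have hGanti' : AntitoneOn (fun s => ER' (xR + s) - ED' (xD - s)) (Set.Icc (0:ℝ) xD) := by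
      apply antiOn_aux hG
      intro t ht
      have h1 := (hERbd _ (hmemR t ht)).2
      have h2 := (hEDbd _ (hmemD t ht)).2
      linarith
    intro t ht
    have htIcc : t ∈ Set.Icc (0:ℝ) xD := ⟨ht.1, le_trans ht.2 hδle⟩
    have := hGanti' htIcc hδstarIcc (le_trans ht.2 hδδstar)
    simp only at this
    linarith
  have hFmono : MonotoneOn (fun s => ER (xR + s) + ED (xD - s)) (Set.Icc (0:ℝ) δ) := by
    apply monoOn_aux (f' := fun t => ER' (xR + t) - ED' (xD - t))
    · intro t ht
      exact hF t ⟨ht.1, le_trans ht.2 hδle⟩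
    · exact hGnonneg
  -- case split
  rcases le_or_gt δ (g/(2*L)) with hcase | hcase
  · -- small δ : use Taylor at δ directly
    have hT := hTaylor δ hδIcc
    have hglb : g ≤ 4*L*δ := by nlinarith [hδstarlb, hhalf]
    have hub : 2*L*δ ≤ g := by
      rw [le_div_iff₀ (by positivity : (0:ℝ) < 2*L)] at hcase
      linarith
    rw [ge_iff_le, div_le_iff₀ (by positivity : (0:ℝ) < 16*L)]
    nlinarith [hT, mul_nonneg (by linarith : (0:ℝ) ≤ 4*L*δ - g) (by linarith : (0:ℝ) ≤ 3*g - 4*L*δ)]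
  · -- large δ : use monotonicity down to g/(2L)
    set d := g/(2*L) with hd
    have hdpos : 0 < d := by positivity
    have hdIcc : d ∈ Set.Icc (0:ℝ) xD := ⟨hdpos.le, le_trans hcase.le hδle⟩
    have hT := hTaylor d hdIcc
    have hFd := hFmono ⟨hdpos.le, hcase.le⟩ ⟨hδpos.le, le_refl δ⟩ hcase.le
    simp only at hFd
    have hkey : g*d - L*d^2 = g^2/(4*L) := by
      rw [hd]
      field_simp
      ring
    have hfin : 3 * g ^ 2 / (16 * L) ≤ g^2/(4*L) := by
      rw [div_le_div_iff₀ (by positivity) (by positivity)]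
      nlinarith [sq_nonneg g]
    linarith
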